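/- For a partition λ of size n and its conjugate λ', and any m, the number of quasi-Yamanouchi tableaux of shape λ with maximum entry exactly m equals the number of quasi-Yamanouchi tableaux of shape λ' with maximum entry exactly (n+1)−m. -/

import Mathlib

open YoungDiagram

/-- Entries of `T` are all `< m`.  Entries are 0-based: the value `v` represents the
positive integer `v + 1`, so this says all (1-based) entries are at most `m`. -/
def EntryLE (μ : YoungDiagram) (T : SemistandardYoungTableau μ) (m : ℕ) : Prop :=
  ∀ i j : ℕ, (i, j) ∈ μ → T i j < m

/-- `T` is quasi-Yamanouchi: whenever a value `v > 0` appears, the leftmost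
occurrence of `v` is weakly left of some occurrence of `v - 1`; equivalently some
occurrence of `v` is weakly left of some occurrence of `v - 1`. -/
def IsQY (μ : YoungDiagram) (T : SemistandardYoungTableau μ) : Prop :=
  ∀ v : ℕ, 0 < v → (∃ i j : ℕ, (i, j) ∈ μ ∧ T i j = v) →
    ∃ i j i' j' : ℕ, (i, j) ∈ μ ∧ (i', j') ∈ μ ∧ T i j = v ∧ T i' j' = v - 1 ∧ j ≤ j'

/-- The maximum (1-based) entry of `T` is exactly `m`: all entries are `< m`
(0-based) and the value `m - 1` appears. -/
def MaxEq (μ : YoungDiagram) (T : SemistandardYoungTableau μ) (m : ℕ) : Prop :=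
  EntryLE μ T m ∧ ∃ i j : ℕ, (i, j) ∈ μ ∧ T i j = m - 1

/-- The number of quasi-Yamanouchi tableaux of shape `μ` with maximum entry exactly `m`. -/
noncomputable def QYTeq (μ : YoungDiagram) (m : ℕ) : ℕ :=
  Nat.card {T : SemistandardYoungTableau μ // IsQY μ T ∧ MaxEq μ T m}

/-- The number of semistandard Young tableaux of shape `μ` with entries at most `m`. -/
noncomputable def SSYTle (μ : YoungDiagram) (m : ℕ) : ℕ :=
  Nat.card {T : SemistandardYoungTableau μ // EntryLE μ T m}

/-- `T` is a standard Young tableau: each of the values `0, …, μ.card - 1`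
(representing `1, …, n`) appears exactly once. -/
def IsSYT (μ : YoungDiagram) (T : SemistandardYoungTableau μ) : Prop :=
  ∀ v : ℕ, v < μ.card → ∃! p : ℕ × ℕ, p ∈ μ ∧ T p.1 p.2 = v

/-- The number of standard Young tableaux of shape `μ`. -/
noncomputable def SYTcount (μ : YoungDiagram) : ℕ :=
  Nat.card {T : SemistandardYoungTableau μ // IsSYT μ T}

/-- The descent set of a standard tableau, in the paper's 1-based labelling:
`d ∈ Des T` iff `1 ≤ d ≤ n - 1` and the (1-based) entry `d + 1` (0-based value `d`)
appears weakly left of the (1-based) entry `d` (0-based value `d - 1`). -/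
def Des (μ : YoungDiagram) (T : SemistandardYoungTableau μ) : Set ℕ :=
  {d | 1 ≤ d ∧ d ≤ μ.card - 1 ∧
    ∃ i j i' j' : ℕ, (i, j) ∈ μ ∧ (i', j') ∈ μ ∧ T i j = d ∧ T i' j' = d - 1 ∧ j ≤ j'}

/-- One destandardization step at value `v`: every occurrence of `v` lies strictly
right of every occurrence of `v - 1` (in particular vacuously if no `v - 1` appears),
and `T'` is obtained from `T` by decrementing every entry equal to `v` to `v - 1`. -/
def StepAt (μ : YoungDiagram) (T T' : SemistandardYoungTableau μ) (v : ℕ) : Prop :=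
  0 < v ∧ (∃ i j : ℕ, (i, j) ∈ μ ∧ T i j = v) ∧
    (∀ i j i' j' : ℕ, (i, j) ∈ μ → (i', j') ∈ μ → T i j = v → T i' j' = v - 1 → j' < j) ∧
    (∀ i j : ℕ, (i, j) ∈ μ → T' i j = if T i j = v then v - 1 else T i j)

/-- One destandardization step (at some value). -/
def Step (μ : YoungDiagram) (T T' : SemistandardYoungTableau μ) : Prop :=
  ∃ v : ℕ, StepAt μ T T' v

/-- `Q` is the destandardization of `T`: it is reachable from `T` by destandardization
steps and no further step applies to it. -/
def IsDst (μ : YoungDiagram) (T Q : SemistandardYoungTableau μ) : Prop :=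
  Relation.ReflTransGen (Step μ) T Q ∧ ∀ Q' : SemistandardYoungTableau μ, ¬ Step μ Q Q'

/-- The hook length of the box in row `i`, column `j` of `μ`. -/
def hookLength (μ : YoungDiagram) (i j : ℕ) : ℕ :=
  (μ.rowLen i - j) + (μ.colLen j - i) - 1

/-- The hook-content product `∏_{u ∈ μ} (k + c(u)) / h(u)` where `c(u)` is the
content (column minus row) and `h(u)` the hook length. -/
noncomputable def hookContent (μ : YoungDiagram) (k : ℕ) : ℚ :=
  ∏ c ∈ μ.cells, ((k : ℚ) + (c.2 : ℚ) - (c.1 : ℚ)) / (hookLength μ c.1 c.2 : ℚ)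

/-- `μ` is the partition `(l1, l2, 2^{h2-2}, 1^{h1-h2})`: first row `l1`, second row
`l2`, rows `2, …, h2 - 1` of length `2`, rows `h2, …, h1 - 1` of length `1`, and no
other rows; so the first column has height `h1` and the second column height `h2`. -/
def HasRows2 (μ : YoungDiagram) (l1 l2 h1 h2 : ℕ) : Prop :=
  μ.rowLen 0 = l1 ∧ μ.rowLen 1 = l2 ∧
    (∀ i : ℕ, 2 ≤ i → i < h2 → μ.rowLen i = 2) ∧
    (∀ i : ℕ, h2 ≤ i → i < h1 → μ.rowLen i = 1) ∧
    (∀ i : ℕ, h1 ≤ i → μ.rowLen i = 0)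


namespace QYTaux
open Finset

/-! ### lexicographic key arithmetic -/

lemma key_lt_iff {B a a' b b' : ℕ} (hb : b < B) (hb' : b' < B) :
    a * B + b < a' * B + b' ↔ a < a' ∨ (a = a' ∧ b < b') := by
  constructor
  · intro h
    rcases lt_trichotomy a a' with h1 | h1 | h1
    · exact Or.inl h1
    · subst h1; exact Or.inr ⟨rfl, by omega⟩
    · exfalso
      have h2 : (a' + 1) * B ≤ a * B := Nat.mul_le_mul_right B h1
      have : a' * B + B ≤ a * B := by nlinarith
      omega
  · rintro (h | ⟨rfl, h⟩)
    · have h2 : (a + 1) * B ≤ a' * B := Nat.mul_le_mul_right B h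
      have : a * B + B ≤ a' * B := by nlinarith
      omega
    · omega

lemma key_eq_iff {B a a' b b' : ℕ} (hb : b < B) (hb' : b' < B) :
    a * B + b = a' * B + b' ↔ a = a' ∧ b = b' := by
  constructor
  · intro h
    rcases lt_trichotomy a a' with hc | hc | hc
    · have := (key_lt_iff hb hb').mpr (Or.inl hc); omega
    · subst hc; exact ⟨rfl, by omega⟩
    · have := (key_lt_iff hb' hb).mpr (Or.inl hc); omega
  · rintro ⟨rfl, rfl⟩; rfl

/-! ### rank machinery -/

variable {s : Finset (ℕ × ℕ)} {key : ℕ × ℕ → ℕ}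

/-- rank of `c` in `s` under `key`. -/
def rk (s : Finset (ℕ × ℕ)) (key : ℕ × ℕ → ℕ) (c : ℕ × ℕ) : ℕ :=
  (s.filter fun x => key x < key c).card

lemma rk_lt_rk {x y : ℕ × ℕ} (hx : x ∈ s) (h : key x < key y) :
    rk s key x < rk s key y := by
  apply Finset.card_lt_card
  constructor
  · intro z hz
    simp only [Finset.mem_filter] at hz ⊢
    exact ⟨hz.1, hz.2.trans h⟩
  · intro hsub
    have hxm : x ∈ s.filter fun z => key z < key y := by
      simp [hx, h]
    have := hsub hxm
    simp only [Finset.mem_filter] at this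
    omega

lemma rk_lt_card {x : ℕ × ℕ} (hx : x ∈ s) : rk s key x < s.card := by
  apply Finset.card_lt_card
  constructor
  · exact Finset.filter_subset _ _
  · intro hsub
    have := hsub hx
    simp only [Finset.mem_filter] at this
    omega

lemma rk_injOn (hinj : ∀ x ∈ s, ∀ y ∈ s, key x = key y → x = y)
    {x y : ℕ × ℕ} (hx : x ∈ s) (hy : y ∈ s) (h : rk s key x = rk s key y) : x = y := by
  rcases lt_trichotomy (key x) (key y) with hc | hc | hc
  · have := rk_lt_rk hx hc; omega
  · exact hinj x hx y hy hc
  · have := rk_lt_rk hy hc; omega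

lemma rk_lt_iff (hinj : ∀ x ∈ s, ∀ y ∈ s, key x = key y → x = y)
    {x y : ℕ × ℕ} (hx : x ∈ s) (hy : y ∈ s) :
    rk s key x < rk s key y ↔ key x < key y := by
  constructor
  · intro h
    rcases lt_trichotomy (key x) (key y) with hc | hc | hc
    · exact hc
    · exact absurd (hinj x hx y hy hc) (by rintro rfl; omega)
    · have := rk_lt_rk hy hc; omega
  · exact rk_lt_rk hx

lemma rk_surj (hinj : ∀ x ∈ s, ∀ y ∈ s, key x = key y → x = y) :
    ∀ v < s.card, ∃ x ∈ s, rk s key x = v := by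
  intro v hv
  have himg : s.image (rk s key) = Finset.range s.card := by
    apply Finset.eq_of_subset_of_card_le
    · intro u hu
      simp only [Finset.mem_image] at hu
      obtain ⟨x, hx, rfl⟩ := hu
      exact Finset.mem_range.mpr (rk_lt_card hx)
    · rw [Finset.card_range, Finset.card_image_of_injOn]
      intro x hx y hy h
      exact rk_injOn hinj hx hy h
  have : v ∈ s.image (rk s key) := by rw [himg]; exact Finset.mem_range.mpr hv
  simpa using this

lemma rk_adj (hinj : ∀ x ∈ s, ∀ y ∈ s, key x = key y → x = y)
    {x y : ℕ × ℕ} (hx : x ∈ s) (hy : y ∈ s) (h : rk s key y = rk s key x + 1) :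
    key x < key y ∧ ∀ z ∈ s, ¬(key x < key z ∧ key z < key y) := by
  constructor
  · rw [← rk_lt_iff hinj hx hy]; omega
  · rintro z hz ⟨h1, h2⟩
    have := rk_lt_rk hx h1
    have := rk_lt_rk hz h2
    omega



/-! ### standardization -/

variable {μ : YoungDiagram}

/-- bound on the column indices of cells of `μ`. -/
def Bnd (μ : YoungDiagram) : ℕ := μ.rowLen 0 + 1

lemma col_lt_Bnd {c : ℕ × ℕ} (hc : c ∈ μ) : c.2 < Bnd μ := by
  have h1 : c.2 < μ.rowLen c.1 := by
    have := (μ.mem_iff_lt_rowLen (i := c.1) (j := c.2)).mp (by simpa using hc)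
    exact this
  have h2 := μ.rowLen_anti 0 c.1 (Nat.zero_le _)
  unfold Bnd; omega

/-- the key of a cell: primarily by entry value, then by column. -/
def keyOf (T : SemistandardYoungTableau μ) (c : ℕ × ℕ) : ℕ :=
  T c.1 c.2 * Bnd μ + c.2

lemma keyOf_lt_iff {T : SemistandardYoungTableau μ} {x y : ℕ × ℕ}
    (hx : x ∈ μ) (hy : y ∈ μ) :
    keyOf T x < keyOf T y ↔
      T x.1 x.2 < T y.1 y.2 ∨ (T x.1 x.2 = T y.1 y.2 ∧ x.2 < y.2) :=
  key_lt_iff (col_lt_Bnd hx) (col_lt_Bnd hy)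

lemma keyOf_injOn (T : SemistandardYoungTableau μ) :
    ∀ x ∈ μ.cells, ∀ y ∈ μ.cells, keyOf T x = keyOf T y → x = y := by
  rintro ⟨x1, x2⟩ hx ⟨y1, y2⟩ hy h
  rw [YoungDiagram.mem_cells] at hx hy
  have h2 := (key_eq_iff (col_lt_Bnd hx) (col_lt_Bnd hy)).mp h
  obtain ⟨hval, hcol⟩ := h2
  simp only at hval hcol
  subst hcol
  have : x1 = y1 := by
    rcases lt_trichotomy x1 y1 with hc | hc | hc
    · have := T.col_strict hc hy; omega
    · exact hc
    · have := T.col_strict hc hx; omega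
  subst this; rfl

/-- The standardization of `T`. -/
noncomputable def std (T : SemistandardYoungTableau μ) : SemistandardYoungTableau μ where
  entry i j := if (i, j) ∈ μ then rk μ.cells (keyOf T) (i, j) else 0
  row_weak' := by
    intro i j1 j2 hj hmem
    have hmem1 : (i, j1) ∈ μ := μ.up_left_mem le_rfl (le_of_lt hj) hmem
    rw [if_pos hmem1, if_pos hmem]
    apply le_of_lt
    apply rk_lt_rk (by simpa using hmem1)
    rw [keyOf_lt_iff hmem1 hmem]
    rcases Nat.lt_or_ge (T i j1) (T i j2) with h | h
    · exact Or.inl h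
    · exact Or.inr ⟨le_antisymm (T.row_weak hj hmem) h, hj⟩
  col_strict' := by
    intro i1 i2 j hi hmem
    have hmem1 : (i1, j) ∈ μ := μ.up_left_mem (le_of_lt hi) le_rfl hmem
    rw [if_pos hmem1, if_pos hmem]
    apply rk_lt_rk (by simpa using hmem1)
    rw [keyOf_lt_iff hmem1 hmem]
    exact Or.inl (T.col_strict hi hmem)
  zeros' := by intro i j h; rw [if_neg h]

lemma std_apply {T : SemistandardYoungTableau μ} {i j : ℕ} (h : (i, j) ∈ μ) :
    std T i j = rk μ.cells (keyOf T) (i, j) := if_pos h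

lemma isSYT_std (T : SemistandardYoungTableau μ) : IsSYT μ (std T) := by
  intro v hv
  obtain ⟨x, hx, hrk⟩ := rk_surj (keyOf_injOn T) v hv
  rw [YoungDiagram.mem_cells] at hx
  refine ⟨x, ⟨hx, ?_⟩, ?_⟩
  · rw [show (std T) x.1 x.2 = rk μ.cells (keyOf T) (x.1, x.2) from std_apply (by simpa using hx)]
    exact hrk
  · rintro y ⟨hy, hval⟩
    apply rk_injOn (keyOf_injOn T) (by simpa using hy) (by simpa using hx)
    rw [show rk μ.cells (keyOf T) y = std T y.1 y.2 from (std_apply (by simpa using hy)).symm]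
    rw [hval, ← hrk]

/-! ### general SYT lemmas -/

/-- the position of value `v` in `S` (junk if `v` does not appear). -/
noncomputable def pos (S : SemistandardYoungTableau μ) (v : ℕ) : ℕ × ℕ :=
  if h : ∃ p : ℕ × ℕ, p ∈ μ ∧ S p.1 p.2 = v then h.choose else (0, 0)

lemma pos_spec {S : SemistandardYoungTableau μ} (hS : IsSYT μ S) {v : ℕ} (hv : v < μ.card) :
    pos S v ∈ μ ∧ S (pos S v).1 (pos S v).2 = v := by
  obtain ⟨p, hp, -⟩ := hS v hv
  have h : ∃ p : ℕ × ℕ, p ∈ μ ∧ S p.1 p.2 = v := ⟨p, hp⟩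
  rw [pos, dif_pos h]
  exact h.choose_spec

lemma pos_unique {S : SemistandardYoungTableau μ} (hS : IsSYT μ S) {v : ℕ} (hv : v < μ.card)
    {p : ℕ × ℕ} (hp : p ∈ μ) (hval : S p.1 p.2 = v) : p = pos S v := by
  obtain ⟨q, hq, huniq⟩ := hS v hv
  have h1 := huniq p ⟨hp, hval⟩
  have h2 := huniq (pos S v) ⟨(pos_spec hS hv).1, (pos_spec hS hv).2⟩
  rw [h1, h2]

lemma syt_lt {S : SemistandardYoungTableau μ} (hS : IsSYT μ S) {i j : ℕ}
    (h : (i, j) ∈ μ) : S i j < μ.card := by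
  by_contra hge
  push_neg at hge
  -- the positions of values 0..card-1 exhaust the cells
  have himg : (Finset.range μ.card).image (pos S) = μ.cells := by
    apply Finset.eq_of_subset_of_card_le
    · intro c hc
      simp only [Finset.mem_image, Finset.mem_range] at hc
      obtain ⟨v, hv, rfl⟩ := hc
      exact (YoungDiagram.mem_cells _).mpr (pos_spec hS hv).1
    · rw [Finset.card_image_of_injOn, Finset.card_range]
      intro v hv w hw hvw
      simp only [Finset.coe_range, Set.mem_Iio] at hv hw
      have h1 := (pos_spec hS hv).2
      have h2 := (pos_spec hS hw).2
      rw [hvw] at h1; omega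
  have : (i, j) ∈ (Finset.range μ.card).image (pos S) := by
    rw [himg]; simpa using h
  simp only [Finset.mem_image, Finset.mem_range] at this
  obtain ⟨v, hv, hvp⟩ := this
  have := (pos_spec hS hv).2
  rw [hvp] at this
  simp only at this
  omega

lemma count_lt {S : SemistandardYoungTableau μ} (hS : IsSYT μ S) :
    ∀ v ≤ μ.card, (μ.cells.filter fun c => S c.1 c.2 < v).card = v := by
  intro v
  induction v with
  | zero => intro _; simp
  | succ v ih =>
    intro hv
    have hv' : v < μ.card := hv
    have hstep : μ.cells.filter (fun c => S c.1 c.2 < v + 1)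
        = insert (pos S v) (μ.cells.filter fun c => S c.1 c.2 < v) := by
      ext c
      simp only [Finset.mem_filter, Finset.mem_insert, YoungDiagram.mem_cells]
      constructor
      · rintro ⟨hc, hlt⟩
        rcases Nat.lt_or_ge (S c.1 c.2) v with h | h
        · exact Or.inr ⟨hc, h⟩
        · have : S c.1 c.2 = v := by omega
          exact Or.inl (pos_unique hS hv' hc this)
      · rintro (rfl | ⟨hc, hlt⟩)
        · exact ⟨(pos_spec hS hv').1, by rw [(pos_spec hS hv').2]; omega⟩
        · exact ⟨hc, by omega⟩
    rw [hstep, Finset.card_insert_of_notMem, ih (by omega)]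
    simp only [Finset.mem_filter]
    rintro ⟨-, hlt⟩
    rw [(pos_spec hS hv').2] at hlt
    omega

/-! ### descent sets as finsets -/

/-- the descent set of `S` as a `Finset`. -/
noncomputable def desF (μ : YoungDiagram) (S : SemistandardYoungTableau μ) : Finset ℕ :=
  @Finset.filter _ (fun d => d ∈ Des μ S) (Classical.decPred _) (Finset.Icc 1 (μ.card - 1))

lemma mem_desF {S : SemistandardYoungTableau μ} {d : ℕ} :
    d ∈ desF μ S ↔ d ∈ Des μ S := by
  rw [desF, @Finset.mem_filter _ _ (Classical.decPred _)]
  constructor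
  · exact fun h => h.2
  · intro h
    exact ⟨Finset.mem_Icc.mpr ⟨h.1, h.2.1⟩, h⟩

lemma desF_subset {S : SemistandardYoungTableau μ} :
    desF μ S ⊆ Finset.Icc 1 (μ.card - 1) := @Finset.filter_subset _ _ (Classical.decPred _) _

/-- characterization of descents by positions, for standard tableaux. -/
lemma des_iff_pos {S : SemistandardYoungTableau μ} (hS : IsSYT μ S) {d : ℕ}
    (hd1 : 1 ≤ d) (hd2 : d ≤ μ.card - 1) (hn : 1 ≤ μ.card) :
    d ∈ Des μ S ↔ (pos S d).2 ≤ (pos S (d - 1)).2 := by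
  have hdlt : d < μ.card := by omega
  have hdlt' : d - 1 < μ.card := by omega
  constructor
  · rintro ⟨-, -, i, j, i', j', hij, hij', hv, hv', hle⟩
    have e1 : ((i, j) : ℕ × ℕ) = pos S d := pos_unique hS hdlt hij hv
    have e2 : ((i', j') : ℕ × ℕ) = pos S (d - 1) := pos_unique hS hdlt' hij' hv'
    rw [← e1, ← e2]
    exact hle
  · intro hle
    refine ⟨hd1, hd2, (pos S d).1, (pos S d).2, (pos S (d - 1)).1, (pos S (d - 1)).2,
      ?_, ?_, ?_, ?_, hle⟩
    · simpa using (pos_spec hS hdlt).1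
    · simpa using (pos_spec hS hdlt').1
    · exact (pos_spec hS hdlt).2
    · exact (pos_spec hS hdlt').2

/-! ### the counting function `f e = #{descents ≤ e}` -/

/-- number of descents `≤ e`. -/
noncomputable def desCnt (μ : YoungDiagram) (S : SemistandardYoungTableau μ) (e : ℕ) : ℕ :=
  ((desF μ S).filter (fun d => d ≤ e)).card

lemma desCnt_mono {S : SemistandardYoungTableau μ} {e e' : ℕ} (h : e ≤ e') :
    desCnt μ S e ≤ desCnt μ S e' := by
  apply Finset.card_le_card
  intro d hd
  simp only [Finset.mem_filter] at hd ⊢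
  exact ⟨hd.1, hd.2.trans h⟩

lemma desCnt_zero {S : SemistandardYoungTableau μ} : desCnt μ S 0 = 0 := by
  rw [desCnt, Finset.card_eq_zero]
  rw [Finset.filter_eq_empty_iff]
  intro d hd
  have := Finset.mem_Icc.mp (desF_subset hd)
  omega

lemma desCnt_le {S : SemistandardYoungTableau μ} {e : ℕ} :
    desCnt μ S e ≤ (desF μ S).card := Finset.card_le_card (Finset.filter_subset _ _)

lemma desCnt_top {S : SemistandardYoungTableau μ} :
    desCnt μ S (μ.card - 1) = (desF μ S).card := by
  rw [desCnt]
  congr 1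
  rw [Finset.filter_eq_self]
  intro d hd
  exact (Finset.mem_Icc.mp (desF_subset hd)).2

lemma desCnt_succ_mem {S : SemistandardYoungTableau μ} {e : ℕ} (h : e + 1 ∈ desF μ S) :
    desCnt μ S (e + 1) = desCnt μ S e + 1 := by
  rw [desCnt, desCnt]
  have : (desF μ S).filter (fun d => d ≤ e + 1)
      = insert (e + 1) ((desF μ S).filter (fun d => d ≤ e)) := by
    ext d
    simp only [Finset.mem_filter, Finset.mem_insert]
    constructor
    · rintro ⟨hd, hle⟩
      rcases Nat.eq_or_lt_of_le hle with h1 | h1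
      · exact Or.inl h1
      · exact Or.inr ⟨hd, by omega⟩
    · rintro (rfl | ⟨hd, hle⟩)
      · exact ⟨h, le_rfl⟩
      · exact ⟨hd, by omega⟩
  rw [this, Finset.card_insert_of_notMem]
  simp only [Finset.mem_filter]
  omega

lemma desCnt_succ_not_mem {S : SemistandardYoungTableau μ} {e : ℕ} (h : e + 1 ∉ desF μ S) :
    desCnt μ S (e + 1) = desCnt μ S e := by
  rw [desCnt, desCnt]
  congr 1
  ext d
  simp only [Finset.mem_filter]
  constructor
  · rintro ⟨hd, hle⟩
    refine ⟨hd, ?_⟩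
    rcases Nat.eq_or_lt_of_le hle with h1 | h1
    · subst h1; exact absurd hd h
    · omega
  · rintro ⟨hd, hle⟩
    exact ⟨hd, by omega⟩

/-- if there is no descent in `(e, e+k]` then the column of `pos` strictly increases. -/
lemma chain_col {S : SemistandardYoungTableau μ} (hS : IsSYT μ S) (hn : 1 ≤ μ.card) :
    ∀ k e : ℕ, e + k ≤ μ.card - 1 →
      (∀ d, e < d → d ≤ e + k → d ∉ desF μ S) →
      (pos S e).2 + k ≤ (pos S (e + k)).2 := by
  intro k
  induction k with
  | zero => intro e _ _; simp
  | succ k ih =>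
    intro e hbound hno
    have h1 : (pos S e).2 + k ≤ (pos S (e + k)).2 := by
      apply ih e (by omega)
      intro d h2 h3
      exact hno d h2 (by omega)
    have hd1 : 1 ≤ e + k + 1 := by omega
    have hd2 : e + k + 1 ≤ μ.card - 1 := by omega
    have hnd : e + k + 1 ∉ Des μ S := by
      intro hdes
      exact hno (e + k + 1) (by omega) (by omega) (mem_desF.mpr hdes)
    rw [des_iff_pos hS hd1 hd2 hn] at hnd
    push_neg at hnd
    have : e + k + 1 - 1 = e + k := by omega
    rw [this] at hnd
    have : e + (k + 1) = e + k + 1 := by omega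
    rw [this]
    omega

/-- no descent strictly between `e` and `e'` iff counts are equal. -/
lemma desCnt_eq_no_descent {S : SemistandardYoungTableau μ} {e e' : ℕ} (he : e ≤ e')
    (h : desCnt μ S e' ≤ desCnt μ S e) : ∀ d, e < d → d ≤ e' → d ∉ desF μ S := by
  intro d hd1 hd2 hd
  obtain ⟨d', rfl⟩ : ∃ d', d = d' + 1 := ⟨d - 1, by omega⟩
  have h1 : desCnt μ S (d' + 1 - 1) + 1 ≤ desCnt μ S (d' + 1) := by
    simp only [Nat.add_sub_cancel]
    rw [desCnt_succ_mem hd]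
  have h2 : desCnt μ S e ≤ desCnt μ S d' := desCnt_mono (by omega)
  have h3 : desCnt μ S (d' + 1) ≤ desCnt μ S e' := desCnt_mono (by omega)
  simp only [Nat.add_sub_cancel] at h1
  omega

/-- there is a descent realizing each intermediate count value. -/
lemma exists_step {S : SemistandardYoungTableau μ} {v : ℕ} (hv1 : 1 ≤ v)
    (hv2 : v ≤ (desF μ S).card) :
    ∃ d ∈ desF μ S, desCnt μ S d = v ∧ desCnt μ S (d - 1) = v - 1 := by
  classical
  have hex : ∃ e, v ≤ desCnt μ S e := ⟨μ.card - 1, by rw [desCnt_top]; exact hv2⟩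
  set e := Nat.find hex with hEdef
  have hspec : v ≤ desCnt μ S e := Nat.find_spec hex
  have hpos : e ≠ 0 := by
    intro h0
    rw [h0, desCnt_zero] at hspec
    omega
  obtain ⟨e', hE⟩ : ∃ e', e = e' + 1 := ⟨e - 1, by omega⟩
  have hlt : desCnt μ S e' < v := by
    have := Nat.find_min hex (m := e') (by omega)
    omega
  rw [hE] at hspec
  by_cases hmem : e' + 1 ∈ desF μ S
  · have heq := desCnt_succ_mem hmem
    refine ⟨e' + 1, hmem, by omega, ?_⟩
    simp only [Nat.add_sub_cancel]
    omega
  · exfalso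
    have heq := desCnt_succ_not_mem hmem
    omega

/-! ### destandardization -/

lemma card_pos_of_mem {i j : ℕ} (h : (i, j) ∈ μ) : 1 ≤ μ.card :=
  Finset.card_pos.mpr ⟨(i, j), (YoungDiagram.mem_cells _).mpr h⟩

/-- The destandardization of a standard tableau `S`. -/
noncomputable def dst (S : SemistandardYoungTableau μ) (hS : IsSYT μ S) :
    SemistandardYoungTableau μ where
  entry i j := if (i, j) ∈ μ then desCnt μ S (S i j) else 0
  row_weak' := by
    intro i j1 j2 hj hmem
    have hmem1 : (i, j1) ∈ μ := μ.up_left_mem le_rfl (le_of_lt hj) hmem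
    rw [if_pos hmem1, if_pos hmem]
    exact desCnt_mono (S.row_weak hj hmem)
  col_strict' := by
    intro i1 i2 j hi hmem
    have hmem1 : (i1, j) ∈ μ := μ.up_left_mem (le_of_lt hi) le_rfl hmem
    rw [if_pos hmem1, if_pos hmem]
    have hn : 1 ≤ μ.card := card_pos_of_mem hmem
    have hlt : S i1 j < S i2 j := S.col_strict hi hmem
    have hub : S i2 j < μ.card := syt_lt hS hmem
    by_contra hcon
    push_neg at hcon
    have hno := desCnt_eq_no_descent (le_of_lt hlt) hcon
    have hchain := chain_col hS hn (S i2 j - S i1 j) (S i1 j) (by omega)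
      (by intro d h1 h2; exact hno d h1 (by omega))
    have he1 : ((i1, j) : ℕ × ℕ) = pos S (S i1 j) := pos_unique hS (by omega) hmem1 rfl
    have he2 : ((i2, j) : ℕ × ℕ) = pos S (S i1 j + (S i2 j - S i1 j)) := by
      rw [show S i1 j + (S i2 j - S i1 j) = S i2 j by omega]
      exact pos_unique hS hub hmem rfl
    rw [← he1, ← he2] at hchain
    simp only at hchain
    omega
  zeros' := by intro i j h; rw [if_neg h]

lemma dst_apply {S : SemistandardYoungTableau μ} {hS : IsSYT μ S} {i j : ℕ}
    (h : (i, j) ∈ μ) : dst S hS i j = desCnt μ S (S i j) := if_pos h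

lemma pos_mem' {S : SemistandardYoungTableau μ} (hS : IsSYT μ S) {v : ℕ} (hv : v < μ.card) :
    ((pos S v).1, (pos S v).2) ∈ μ := (pos_spec hS hv).1

lemma pos_val' {S : SemistandardYoungTableau μ} (hS : IsSYT μ S) {v : ℕ} (hv : v < μ.card) :
    S (pos S v).1 (pos S v).2 = v := (pos_spec hS hv).2

lemma isQY_dst {S : SemistandardYoungTableau μ} (hS : IsSYT μ S) : IsQY μ (dst S hS) := by
  rintro v hv ⟨i, j, hij, hval⟩
  rw [dst_apply hij] at hval
  have hvle : v ≤ (desF μ S).card := hval ▸ desCnt_le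
  obtain ⟨d, hd, h1, h2⟩ := exists_step hv hvle
  have hdIcc := Finset.mem_Icc.mp (desF_subset hd)
  have hn : 1 ≤ μ.card := by
    have := card_pos_of_mem hij; omega
  have hdes := (des_iff_pos hS hdIcc.1 hdIcc.2 hn).mp (mem_desF.mp hd)
  have hdlt : d < μ.card := by omega
  have hdlt' : d - 1 < μ.card := by omega
  refine ⟨(pos S d).1, (pos S d).2, (pos S (d - 1)).1, (pos S (d - 1)).2,
    pos_mem' hS hdlt, pos_mem' hS hdlt', ?_, ?_, hdes⟩
  · rw [dst_apply (pos_mem' hS hdlt), pos_val' hS hdlt, h1]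
  · rw [dst_apply (pos_mem' hS hdlt'), pos_val' hS hdlt', h2]

lemma maxEq_dst {S : SemistandardYoungTableau μ} (hS : IsSYT μ S) (hn : 1 ≤ μ.card) :
    MaxEq μ (dst S hS) ((desF μ S).card + 1) := by
  constructor
  · intro i j hij
    rw [dst_apply hij]
    have := desCnt_le (μ := μ) (S := S) (e := S i j)
    omega
  · have hlt : μ.card - 1 < μ.card := by omega
    refine ⟨(pos S (μ.card - 1)).1, (pos S (μ.card - 1)).2, pos_mem' hS hlt, ?_⟩
    rw [dst_apply (pos_mem' hS hlt), pos_val' hS hlt, desCnt_top]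
    omega

lemma maxEq_dst' {S : SemistandardYoungTableau μ} (hS : IsSYT μ S) (hn : 1 ≤ μ.card)
    {m : ℕ} (hmeq : (desF μ S).card + 1 = m) : MaxEq μ (dst S hS) m := by
  subst hmeq; exact maxEq_dst hS hn

lemma key_dst_mono {S : SemistandardYoungTableau μ} (hS : IsSYT μ S) (hn : 1 ≤ μ.card)
    {x y : ℕ × ℕ} (hx : x ∈ μ) (hy : y ∈ μ) (h : S x.1 x.2 < S y.1 y.2) :
    keyOf (dst S hS) x < keyOf (dst S hS) y := by
  rw [keyOf_lt_iff hx hy]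
  have hax : dst S hS x.1 x.2 = desCnt μ S (S x.1 x.2) := dst_apply (by simpa using hx)
  have hay : dst S hS y.1 y.2 = desCnt μ S (S y.1 y.2) := dst_apply (by simpa using hy)
  rw [hax, hay]
  have hmono : desCnt μ S (S x.1 x.2) ≤ desCnt μ S (S y.1 y.2) := desCnt_mono (le_of_lt h)
  rcases Nat.lt_or_ge (desCnt μ S (S x.1 x.2)) (desCnt μ S (S y.1 y.2)) with hc | hc
  · exact Or.inl hc
  · refine Or.inr ⟨by omega, ?_⟩
    have hub : S y.1 y.2 < μ.card := syt_lt hS (by simpa using hy)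
    have hno := desCnt_eq_no_descent (μ := μ) (S := S) (e := S x.1 x.2) (e' := S y.1 y.2) (le_of_lt h) (by omega)
    have hchain := chain_col hS hn (S y.1 y.2 - S x.1 x.2) (S x.1 x.2) (by omega)
      (by intro d h1 h2; exact hno d h1 (by omega))
    have he1 : x = pos S (S x.1 x.2) := pos_unique hS (by omega) (by simpa using hx) rfl
    have he2 : y = pos S (S x.1 x.2 + (S y.1 y.2 - S x.1 x.2)) := by
      rw [show S x.1 x.2 + (S y.1 y.2 - S x.1 x.2) = S y.1 y.2 by omega]
      exact pos_unique hS hub (by simpa using hy) rfl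
    rw [← he1, ← he2] at hchain
    omega

lemma key_dst_iff {S : SemistandardYoungTableau μ} (hS : IsSYT μ S) (hn : 1 ≤ μ.card)
    {x y : ℕ × ℕ} (hx : x ∈ μ) (hy : y ∈ μ) :
    keyOf (dst S hS) x < keyOf (dst S hS) y ↔ S x.1 x.2 < S y.1 y.2 := by
  constructor
  · intro h
    rcases lt_trichotomy (S x.1 x.2) (S y.1 y.2) with hc | hc | hc
    · exact hc
    · exfalso
      have hux : S x.1 x.2 < μ.card := syt_lt hS (by simpa using hx)
      have he1 : x = pos S (S x.1 x.2) := pos_unique hS hux (by simpa using hx) rfl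
      have he2 : y = pos S (S x.1 x.2) := pos_unique hS hux (by simpa using hy) hc.symm
      rw [he1, ← he2] at h
      omega
    · have := key_dst_mono hS hn hy hx hc; omega
  · exact key_dst_mono hS hn hx hy

lemma std_dst {S : SemistandardYoungTableau μ} (hS : IsSYT μ S) (hn : 1 ≤ μ.card) :
    std (dst S hS) = S := by
  apply SemistandardYoungTableau.ext
  intro i j
  by_cases hij : (i, j) ∈ μ
  · have hfil : (μ.cells.filter fun z => keyOf (dst S hS) z < keyOf (dst S hS) (i, j))
        = μ.cells.filter fun z => S z.1 z.2 < S i j := by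
      apply Finset.filter_congr
      intro z hz
      exact key_dst_iff hS hn (by simpa using hz) hij
    rw [std_apply hij, rk, hfil, count_lt hS (S i j) (le_of_lt (syt_lt hS hij))]
  · rw [(std (dst S hS)).zeros hij, (S.zeros hij)]

/-! ### structure of the standardization of a QY tableau -/

lemma attain_all {T : SemistandardYoungTableau μ} (hQY : IsQY μ T) {m : ℕ}
    (hmax : MaxEq μ T m) : ∀ v < m, ∃ i j : ℕ, (i, j) ∈ μ ∧ T i j = v := by
  have aux : ∀ k, k ≤ m - 1 → ∃ i j : ℕ, (i, j) ∈ μ ∧ T i j = m - 1 - k := by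
    intro k
    induction k with
    | zero => intro _; simpa using hmax.2
    | succ k ih =>
      intro hk
      obtain ⟨i, j, hij, hval⟩ := ih (by omega)
      have hpos : 0 < m - 1 - k := by omega
      obtain ⟨a, b, a', b', ha, ha', hv, hv', -⟩ :=
        hQY (m - 1 - k) hpos ⟨i, j, hij, hval⟩
      exact ⟨a', b', ha', by rw [hv']; omega⟩
  intro v hv
  obtain ⟨i, j, hij, hval⟩ := aux (m - 1 - v) (by omega)
  exact ⟨i, j, hij, by rw [hval]; omega⟩

lemma rk_pos {T : SemistandardYoungTableau μ} {d : ℕ} (hd : d < μ.card) :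
    rk μ.cells (keyOf T) ((pos (std T) d).1, (pos (std T) d).2) = d := by
  rw [← std_apply (pos_mem' (isSYT_std T) hd)]
  exact pos_val' (isSYT_std T) hd

/-- dichotomy for adjacent ranks in the standardization of a QY tableau. -/
lemma std_step {T : SemistandardYoungTableau μ} (hQY : IsQY μ T) {d : ℕ}
    (hd1 : 1 ≤ d) (hd : d < μ.card) :
    (T (pos (std T) d).1 (pos (std T) d).2
        = T (pos (std T) (d - 1)).1 (pos (std T) (d - 1)).2 ∨
      T (pos (std T) d).1 (pos (std T) d).2
        = T (pos (std T) (d - 1)).1 (pos (std T) (d - 1)).2 + 1) ∧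
    (d ∈ Des μ (std T) ↔
      T (pos (std T) d).1 (pos (std T) d).2
        = T (pos (std T) (d - 1)).1 (pos (std T) (d - 1)).2 + 1) := by
  have hstd := isSYT_std T
  set p := pos (std T) d with hp
  set q := pos (std T) (d - 1) with hq
  have hpm : (p.1, p.2) ∈ μ := pos_mem' hstd hd
  have hqm : (q.1, q.2) ∈ μ := pos_mem' hstd (by omega)
  have hrkp : rk μ.cells (keyOf T) (p.1, p.2) = d := rk_pos hd
  have hrkq : rk μ.cells (keyOf T) (q.1, q.2) = d - 1 := rk_pos (by omega)
  have hadj := rk_adj (keyOf_injOn T) (x := (q.1, q.2)) (y := (p.1, p.2))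
    (by simpa using hqm) (by simpa using hpm) (by omega)
  obtain ⟨hklt, hnoz⟩ := hadj
  have hkey : T q.1 q.2 < T p.1 p.2 ∨ (T q.1 q.2 = T p.1 p.2 ∧ q.2 < p.2) :=
    (keyOf_lt_iff hqm hpm).mp hklt
  -- claim A : T p ≤ T q + 1
  have hA : T p.1 p.2 ≤ T q.1 q.2 + 1 := by
    by_contra hcon
    push_neg at hcon
    have hvpos : 0 < T p.1 p.2 := by omega
    obtain ⟨a, b, a', b', ha, ha', hv, hv', -⟩ :=
      hQY (T p.1 p.2) hvpos ⟨p.1, p.2, hpm, rfl⟩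
    refine hnoz (a', b') (by simpa using ha') ⟨?_, ?_⟩
    · exact (keyOf_lt_iff hqm ha').mpr (Or.inl (show T q.1 q.2 < T a' b' by omega))
    · exact (keyOf_lt_iff ha' hpm).mpr (Or.inl (show T a' b' < T p.1 p.2 by omega))
  have hdich : T p.1 p.2 = T q.1 q.2 ∨ T p.1 p.2 = T q.1 q.2 + 1 := by
    rcases hkey with h | ⟨h, -⟩
    · right; omega
    · left; omega
  refine ⟨hdich, ?_, ?_⟩
  · intro hdes
    have hn : 1 ≤ μ.card := by omega
    have hcol := (des_iff_pos hstd hd1 (by omega) hn).mp hdes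
    rcases hkey with h | ⟨h, hcl⟩
    · omega
    · exfalso
      rw [← hp, ← hq] at hcol
      omega
  · intro heq
    have hvpos : 0 < T p.1 p.2 := by omega
    obtain ⟨a, b, a', b', ha, ha', hv, hv', hbb⟩ :=
      hQY (T p.1 p.2) hvpos ⟨p.1, p.2, hpm, rfl⟩
    have hc1 : p.2 ≤ b := by
      by_contra hcon
      push_neg at hcon
      refine hnoz (a, b) (by simpa using ha) ⟨?_, ?_⟩
      · exact (keyOf_lt_iff hqm ha).mpr (Or.inl (show T q.1 q.2 < T a b by omega))
      · exact (keyOf_lt_iff ha hpm).mpr (Or.inr ⟨show T a b = T p.1 p.2 from hv, hcon⟩)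
    have hc2 : b' ≤ q.2 := by
      by_contra hcon
      push_neg at hcon
      refine hnoz (a', b') (by simpa using ha') ⟨?_, ?_⟩
      · exact (keyOf_lt_iff hqm ha').mpr (Or.inr ⟨show T q.1 q.2 = T a' b' by omega, hcon⟩)
      · exact (keyOf_lt_iff ha' hpm).mpr (Or.inl (show T a' b' < T p.1 p.2 by omega))
    refine ⟨hd1, by omega, p.1, p.2, q.1, q.2, hpm, hqm, ?_, ?_, by omega⟩
    · rw [show (std T) p.1 p.2 = rk μ.cells (keyOf T) (p.1, p.2) from std_apply hpm, hrkp]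
    · rw [show (std T) q.1 q.2 = rk μ.cells (keyOf T) (q.1, q.2) from std_apply hqm, hrkq]

lemma std_pos_zero {T : SemistandardYoungTableau μ} (hQY : IsQY μ T) {m : ℕ}
    (hmax : MaxEq μ T m) (hm : 1 ≤ m) (hn : 1 ≤ μ.card) :
    T (pos (std T) 0).1 (pos (std T) 0).2 = 0 := by
  have hstd := isSYT_std T
  obtain ⟨i, j, hij, hval⟩ := attain_all hQY hmax 0 (by omega)
  by_contra hcon
  have hpm : ((pos (std T) 0).1, (pos (std T) 0).2) ∈ μ := pos_mem' hstd hn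
  have hkey : keyOf T (i, j) < keyOf T ((pos (std T) 0).1, (pos (std T) 0).2) :=
    (keyOf_lt_iff hij hpm).mpr
      (Or.inl (show T i j < T (pos (std T) 0).1 (pos (std T) 0).2 by omega))
  have := rk_lt_rk (s := μ.cells) (by simpa using hij) hkey
  rw [rk_pos hn] at this
  omega

lemma std_pos_top {T : SemistandardYoungTableau μ} {m : ℕ}
    (hmax : MaxEq μ T m) (hn : 1 ≤ μ.card) :
    T (pos (std T) (μ.card - 1)).1 (pos (std T) (μ.card - 1)).2 = m - 1 := by
  have hstd := isSYT_std T
  obtain ⟨i, j, hij, hval⟩ := hmax.2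
  have hpm : ((pos (std T) (μ.card - 1)).1, (pos (std T) (μ.card - 1)).2) ∈ μ :=
    pos_mem' hstd (by omega)
  have hub : T (pos (std T) (μ.card - 1)).1 (pos (std T) (μ.card - 1)).2 < m :=
    hmax.1 _ _ hpm
  by_contra hcon
  have hlt : T (pos (std T) (μ.card - 1)).1 (pos (std T) (μ.card - 1)).2 < m - 1 := by omega
  have hkey : keyOf T ((pos (std T) (μ.card - 1)).1, (pos (std T) (μ.card - 1)).2)
      < keyOf T (i, j) := (keyOf_lt_iff hpm hij).mpr
        (Or.inl (show T (pos (std T) (μ.card - 1)).1 (pos (std T) (μ.card - 1)).2 < T i j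
          by omega))
  have h1 := rk_lt_rk (s := μ.cells) (by simpa using hpm) hkey
  have h2 : rk μ.cells (keyOf T) (i, j) < μ.card :=
    rk_lt_card (s := μ.cells) (key := keyOf T) (by simpa using hij)
  rw [rk_pos (by omega)] at h1
  omega

lemma desCnt_std {T : SemistandardYoungTableau μ} (hQY : IsQY μ T) {m : ℕ}
    (hmax : MaxEq μ T m) (hm : 1 ≤ m) (hn : 1 ≤ μ.card) :
    ∀ e ≤ μ.card - 1, desCnt μ (std T) e = T (pos (std T) e).1 (pos (std T) e).2 := by
  intro e
  induction e with
  | zero =>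
    intro _
    rw [desCnt_zero, std_pos_zero hQY hmax hm hn]
  | succ e ih =>
    intro he
    have hih := ih (by omega)
    have hstep := std_step hQY (d := e + 1) (by omega) (by omega)
    simp only [Nat.add_sub_cancel] at hstep
    by_cases hmem : e + 1 ∈ desF μ (std T)
    · rw [desCnt_succ_mem hmem, hih, (hstep.2.mp (mem_desF.mp hmem))]
    · rw [desCnt_succ_not_mem hmem]
      have hnotdes : e + 1 ∉ Des μ (std T) := fun h => hmem (mem_desF.mpr h)
      rcases hstep.1 with h | h
      · rw [hih, ← h]
      · exact absurd (hstep.2.mpr h) hnotdes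

lemma desF_card_std {T : SemistandardYoungTableau μ} (hQY : IsQY μ T) {m : ℕ}
    (hmax : MaxEq μ T m) (hm : 1 ≤ m) (hn : 1 ≤ μ.card) :
    (desF μ (std T)).card = m - 1 := by
  rw [← desCnt_top, desCnt_std hQY hmax hm hn (μ.card - 1) le_rfl,
    std_pos_top hmax hn]

lemma dst_std {T : SemistandardYoungTableau μ} (hQY : IsQY μ T) {m : ℕ}
    (hmax : MaxEq μ T m) (hm : 1 ≤ m) (hn : 1 ≤ μ.card) :
    dst (std T) (isSYT_std T) = T := by
  apply SemistandardYoungTableau.ext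
  intro i j
  by_cases hij : (i, j) ∈ μ
  · have hrk : (std T) i j = rk μ.cells (keyOf T) (i, j) := std_apply hij
    have hub : (std T) i j < μ.card := by rw [hrk]; exact rk_lt_card (by simpa using hij)
    rw [dst_apply hij, desCnt_std hQY hmax hm hn _ (by omega)]
    have : ((i, j) : ℕ × ℕ) = pos (std T) ((std T) i j) :=
      pos_unique (isSYT_std T) hub hij rfl
    rw [← this]
  · rw [(dst (std T) (isSYT_std T)).zeros hij, T.zeros hij]

/-! ### the two counts -/

/-- number of SYT of shape `μ` with exactly `k` descents. -/
noncomputable def DCount (μ : YoungDiagram) (k : ℕ) : ℕ :=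
  Nat.card {S : SemistandardYoungTableau μ // IsSYT μ S ∧ (desF μ S).card = k}

lemma QYTeq_eq_DCount (μ : YoungDiagram) {m : ℕ} (hn : 1 ≤ μ.card) (hm : 1 ≤ m) :
    QYTeq μ m = DCount μ (m - 1) := by
  apply Nat.card_congr
  refine
    { toFun := fun x => ⟨std x.1, isSYT_std x.1, desF_card_std x.2.1 x.2.2 hm hn⟩
      invFun := fun y => ⟨dst y.1 y.2.1, isQY_dst y.2.1, ?_⟩
      left_inv := fun x => Subtype.ext (dst_std x.2.1 x.2.2 hm hn)
      right_inv := fun y => Subtype.ext (std_dst y.2.1 hn) }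
  refine maxEq_dst' y.2.1 hn ?_
  have := y.2.2
  omega

/-! ### transposition -/

/-- transposing a standard tableau. -/
def trGen (ν δ : YoungDiagram) (hmem : ∀ i j : ℕ, (i, j) ∈ δ ↔ (j, i) ∈ ν)
    (S : SemistandardYoungTableau ν) (hS : IsSYT ν S) : SemistandardYoungTableau δ where
  entry i j := S j i
  row_weak' := by
    intro i j1 j2 hj hcell
    exact le_of_lt (S.col_strict hj ((hmem i j2).mp hcell))
  col_strict' := by
    intro i1 i2 j hi hcell
    have h2 : (j, i2) ∈ ν := (hmem i2 j).mp hcell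
    have h1 : (j, i1) ∈ ν := ν.up_left_mem le_rfl (le_of_lt hi) h2
    have hle : S j i1 ≤ S j i2 := S.row_weak_of_le (le_of_lt hi) h2
    rcases Nat.eq_or_lt_of_le hle with he | hlt
    · exfalso
      have hub : S j i2 < ν.card := syt_lt hS h2
      have e1 : ((j, i1) : ℕ × ℕ) = pos S (S j i2) := pos_unique hS hub h1 he
      have e2 : ((j, i2) : ℕ × ℕ) = pos S (S j i2) := pos_unique hS hub h2 rfl
      rw [← e2] at e1
      have := (Prod.ext_iff.mp e1).2
      omega
    · exact hlt
  zeros' := by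
    intro i j h
    exact S.zeros fun hc => h ((hmem i j).mpr hc)

lemma card_eq_of_hmem {ν δ : YoungDiagram} (hmem : ∀ i j : ℕ, (i, j) ∈ δ ↔ (j, i) ∈ ν) :
    δ.card = ν.card := by
  apply Finset.card_bij (fun c _ => c.swap)
  · intro c hc
    rw [YoungDiagram.mem_cells] at hc
    rw [YoungDiagram.mem_cells]
    exact (hmem c.1 c.2).mp hc
  · intro a _ b _ h
    exact Prod.swap_injective h
  · intro b hb
    rw [YoungDiagram.mem_cells] at hb
    refine ⟨b.swap, ?_, by simp⟩
    rw [YoungDiagram.mem_cells]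
    exact (hmem b.2 b.1).mpr hb

lemma isSYT_trGen {ν δ : YoungDiagram} (hmem : ∀ i j : ℕ, (i, j) ∈ δ ↔ (j, i) ∈ ν)
    {S : SemistandardYoungTableau ν} (hS : IsSYT ν S) :
    IsSYT δ (trGen ν δ hmem S hS) := by
  intro v hv
  rw [card_eq_of_hmem hmem] at hv
  refine ⟨((pos S v).2, (pos S v).1), ⟨(hmem _ _).mpr (pos_mem' hS hv), pos_val' hS hv⟩, ?_⟩
  rintro ⟨q1, q2⟩ ⟨hq, hval⟩
  have hq' : (q2, q1) ∈ ν := (hmem q1 q2).mp hq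
  have := pos_unique hS hv hq' hval
  rw [Prod.ext_iff] at this ⊢
  exact ⟨this.2, this.1⟩

lemma pos_trGen {ν δ : YoungDiagram} (hmem : ∀ i j : ℕ, (i, j) ∈ δ ↔ (j, i) ∈ ν)
    {S : SemistandardYoungTableau ν} (hS : IsSYT ν S) {v : ℕ} (hv : v < ν.card) :
    pos (trGen ν δ hmem S hS) v = ((pos S v).2, (pos S v).1) := by
  refine (pos_unique (isSYT_trGen hmem hS) ?_ ((hmem _ _).mpr (pos_mem' hS hv))
    (pos_val' hS hv)).symm
  rw [card_eq_of_hmem hmem]; exact hv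

/-- the geometric dichotomy for consecutive entries of a standard tableau. -/
lemma des_dichotomy {ν : YoungDiagram} {S : SemistandardYoungTableau ν} (hS : IsSYT ν S)
    {d : ℕ} (hd1 : 1 ≤ d) (hdlt : d < ν.card) :
    ((pos S d).2 ≤ (pos S (d - 1)).2 ↔ ¬((pos S d).1 ≤ (pos S (d - 1)).1)) := by
  have hdlt' : d - 1 < ν.card := by omega
  have hpm : ((pos S d).1, (pos S d).2) ∈ ν := pos_mem' hS hdlt
  have hqm : ((pos S (d - 1)).1, (pos S (d - 1)).2) ∈ ν := pos_mem' hS hdlt'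
  have hpv : S (pos S d).1 (pos S d).2 = d := pos_val' hS hdlt
  have hqv : S (pos S (d - 1)).1 (pos S (d - 1)).2 = d - 1 := pos_val' hS hdlt'
  constructor
  · intro hcol hrow
    have hz : ((pos S d).1, (pos S (d - 1)).2) ∈ ν := ν.up_left_mem hrow le_rfl hqm
    have h1 : S (pos S d).1 (pos S d).2 ≤ S (pos S d).1 (pos S (d - 1)).2 :=
      S.row_weak_of_le hcol hz
    have h2 : S (pos S d).1 (pos S (d - 1)).2 ≤ S (pos S (d - 1)).1 (pos S (d - 1)).2 :=
      S.col_weak hrow hqm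
    omega
  · intro hrow
    push_neg at hrow
    by_contra hcol
    push_neg at hcol
    have hz : ((pos S d).1, (pos S (d - 1)).2) ∈ ν :=
      ν.up_left_mem le_rfl (le_of_lt hcol) hpm
    have h1 : S (pos S (d - 1)).1 (pos S (d - 1)).2 < S (pos S d).1 (pos S (d - 1)).2 :=
      S.col_strict hrow hz
    have h2 : S (pos S d).1 (pos S (d - 1)).2 ≤ S (pos S d).1 (pos S d).2 :=
      S.row_weak_of_le (le_of_lt hcol) hpm
    have hze : S (pos S d).1 (pos S (d - 1)).2 = d := by omega
    have := pos_unique hS hdlt hz hze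
    have := (Prod.ext_iff.mp this).2
    omega

lemma desF_trGen {ν δ : YoungDiagram} (hmem : ∀ i j : ℕ, (i, j) ∈ δ ↔ (j, i) ∈ ν)
    {S : SemistandardYoungTableau ν} (hS : IsSYT ν S) (hn : 1 ≤ ν.card) :
    desF δ (trGen ν δ hmem S hS) = Finset.Icc 1 (ν.card - 1) \ desF ν S := by
  have hcard := card_eq_of_hmem hmem
  ext d
  rw [Finset.mem_sdiff, mem_desF, Finset.mem_Icc]
  constructor
  · intro h
    have hb1 := h.1
    have hb2 : d ≤ δ.card - 1 := h.2.1
    rw [hcard] at hb2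
    have hdlt : d < ν.card := by omega
    have hiff := (des_iff_pos (isSYT_trGen hmem hS) hb1 h.2.1 (by rw [hcard]; omega)).mp h
    rw [pos_trGen hmem hS hdlt, pos_trGen hmem hS (by omega : d - 1 < ν.card)] at hiff
    simp only at hiff
    refine ⟨⟨hb1, hb2⟩, fun hdes => ?_⟩
    have hcol := (des_iff_pos hS hb1 hb2 hn).mp (mem_desF.mp hdes)
    have := (des_dichotomy hS hb1 hdlt).mp hcol
    exact this hiff
  · rintro ⟨⟨hb1, hb2⟩, hnot⟩
    have hdlt : d < ν.card := by omega
    have hrow : (pos S d).1 ≤ (pos S (d - 1)).1 := by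
      by_contra hr
      have hcol := (des_dichotomy hS hb1 hdlt).mpr hr
      exact hnot (mem_desF.mpr ((des_iff_pos hS hb1 hb2 hn).mpr hcol))
    apply (des_iff_pos (isSYT_trGen hmem hS) hb1 (by rw [hcard]; omega)
      (by rw [hcard]; omega)).mpr
    rw [pos_trGen hmem hS hdlt, pos_trGen hmem hS (by omega : d - 1 < ν.card)]
    simpa using hrow

lemma desF_card_trGen {ν δ : YoungDiagram} (hmem : ∀ i j : ℕ, (i, j) ∈ δ ↔ (j, i) ∈ ν)
    {S : SemistandardYoungTableau ν} (hS : IsSYT ν S) (hn : 1 ≤ ν.card) :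
    (desF δ (trGen ν δ hmem S hS)).card = (ν.card - 1) - (desF ν S).card := by
  rw [desF_trGen hmem hS hn, Finset.card_sdiff_of_subset desF_subset, Nat.card_Icc]
  omega

lemma hmemT (μ : YoungDiagram) : ∀ i j : ℕ, (i, j) ∈ μ.transpose ↔ (j, i) ∈ μ :=
  fun _ _ => YoungDiagram.mem_transpose

lemma hmemT' (μ : YoungDiagram) : ∀ i j : ℕ, (i, j) ∈ μ ↔ (j, i) ∈ μ.transpose := by
  intro i j
  rw [YoungDiagram.mem_transpose]
  rfl

lemma card_transpose' (μ : YoungDiagram) : μ.transpose.card = μ.card :=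
  card_eq_of_hmem (hmemT μ)

lemma DCount_transpose (μ : YoungDiagram) {k : ℕ} (hn : 1 ≤ μ.card) (hk : k ≤ μ.card - 1) :
    DCount μ k = DCount μ.transpose (μ.card - 1 - k) := by
  have hnT : 1 ≤ μ.transpose.card := by rw [card_transpose']; exact hn
  apply Nat.card_congr
  refine
    { toFun := fun x => ⟨trGen μ μ.transpose (hmemT μ) x.1 x.2.1,
        isSYT_trGen (hmemT μ) x.2.1, ?_⟩
      invFun := fun y => ⟨trGen μ.transpose μ (hmemT' μ) y.1 y.2.1,
        isSYT_trGen (hmemT' μ) y.2.1, ?_⟩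
      left_inv := fun x => Subtype.ext (SemistandardYoungTableau.ext fun i j => rfl)
      right_inv := fun y => Subtype.ext (SemistandardYoungTableau.ext fun i j => rfl) }
  · rw [desF_card_trGen (hmemT μ) x.2.1 hn, x.2.2]
  · rw [desF_card_trGen (hmemT' μ) y.2.1 hnT, y.2.2, card_transpose']
    omega

lemma QYTeq_eq_zero_of {μ : YoungDiagram} {m : ℕ} (h : m = 0 ∨ μ.card < m) :
    QYTeq μ m = 0 := by
  have : IsEmpty {T : SemistandardYoungTableau μ // IsQY μ T ∧ MaxEq μ T m} := by
    constructor
    rintro ⟨T, hQY, hmax⟩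
    rcases h with rfl | hlt
    · obtain ⟨i, j, hij, -⟩ := hmax.2
      exact absurd (hmax.1 i j hij) (by omega)
    · have hsub : Finset.range m ⊆ μ.cells.image fun c => T c.1 c.2 := by
        intro v hv
        obtain ⟨i, j, hij, hval⟩ := attain_all hQY hmax v (Finset.mem_range.mp hv)
        exact Finset.mem_image.mpr ⟨(i, j), by simpa using hij, hval⟩
      have h1 := Finset.card_le_card hsub
      have h2 := Finset.card_image_le (s := μ.cells) (f := fun c => T c.1 c.2)
      rw [Finset.card_range] at h1
      have h3 : μ.card = μ.cells.card := rfl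
      omega
  rw [QYTeq]
  exact Nat.card_of_isEmpty

end QYTaux

/-- For a partition `λ` of size `n` with conjugate `λ'`, and any `m`,
`QYT_{=m}(λ) = QYT_{=(n+1)-m}(λ')`. -/
theorem qyt_conjugate_symmetry (μ : YoungDiagram) (m : ℕ) :
    QYTeq μ m = QYTeq μ.transpose (μ.card + 1 - m) := by
  have hcT := QYTaux.card_transpose' μ
  by_cases hm0 : m = 0
  · subst hm0
    rw [QYTaux.QYTeq_eq_zero_of (Or.inl rfl),
      QYTaux.QYTeq_eq_zero_of (Or.inr (by omega))]
  by_cases hgt : μ.card < m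
  · rw [QYTaux.QYTeq_eq_zero_of (Or.inr hgt),
      QYTaux.QYTeq_eq_zero_of (Or.inl (by omega))]
  push_neg at hgt
  have hm : 1 ≤ m := by omega
  have hn : 1 ≤ μ.card := by omega
  rw [QYTaux.QYTeq_eq_DCount μ hn hm,
    QYTaux.QYTeq_eq_DCount μ.transpose (by omega) (by omega),
    QYTaux.DCount_transpose μ hn (by omega)]
  congr 1
  omega
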